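/- arXiv:1607.03197 — 11 statements merged into one kernel-verified Lean document; each statement's English description precedes it below -/
import Mathlib

section
/- Let Z, Y, R be random variables on a finite probability space such that Y and Z are independent (exclusion restriction) and P(R=1|z,y) > 0 for all (z,y). Suppose two parameterized models agree on all observed-data quantities, i.e., P_{θ1,ξ1}(z, y, R=1) = P_{θ2,ξ2}(z, y, R=1) for all (z,y) and the marginals of Z agree. Then for all (z,y): P_{θ1}(R=1|z,y) / P_{θ2}(R=1|z,y) = P_{ξ2}(y) / P_{ξ1}(y). Consequently, if for every distinct pair of candidates this ratio equality fails for at least one (z,y), the joint distribution P(z,y,r) is identified from the observed-data law. -/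
/-- With a valid IV (Y ⊥ Z, so the joint factorizes as
`q(z) * f(y) * P(R=1|z,y)`), if two candidate models agree on all observed-data
quantities (the joint of `(Z, Y, R=1)` and the marginal of `Z`), then the ratio
of extended propensity scores equals the inverse ratio of outcome laws at every
`(z, y)`.  Consequently, if for every distinct pair of candidates this ratio
equality fails somewhere, the joint distribution `P(z,y,r)` is identified. -/
theorem stmt0 {𝒵 𝒴 : Type*} [Fintype 𝒵] [Fintype 𝒴]
    (π₁ π₂ : 𝒵 → 𝒴 → ℝ)      -- candidate extended propensity scores P_θᵢ(R=1|z,y)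
    (f₁ f₂ : 𝒴 → ℝ)           -- candidate outcome laws P_ξᵢ(y)
    (q₁ q₂ : 𝒵 → ℝ)           -- marginal laws of Z
    (hπ₁ : ∀ z y, 0 < π₁ z y) (hπ₂ : ∀ z y, 0 < π₂ z y)
    (hf₁ : ∀ y, 0 < f₁ y) (hf₂ : ∀ y, 0 < f₂ y)
    (hq₁ : ∀ z, 0 < q₁ z)
    -- the observed-data quantity P(z, y, R=1) agrees between the two candidates
    (hobs : ∀ z y, q₁ z * f₁ y * π₁ z y = q₂ z * f₂ y * π₂ z y)
    -- the marginals of Z agree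
    (hmarg : ∀ z, q₁ z = q₂ z) :
    (∀ z y, π₁ z y / π₂ z y = f₂ y / f₁ y) ∧
    ((¬(π₁ = π₂ ∧ f₁ = f₂) → ∃ z y, π₁ z y / π₂ z y ≠ f₂ y / f₁ y) →
      ∀ z y (r : Bool),
        q₁ z * f₁ y * (if r then π₁ z y else 1 - π₁ z y) =
          q₂ z * f₂ y * (if r then π₂ z y else 1 - π₂ z y)) := by

  have key : ∀ z y, f₁ y * π₁ z y = f₂ y * π₂ z y := by
    intro z y
    have h := hobs z y
    rw [hmarg z] at h
    have hq : q₂ z ≠ 0 := by rw [← hmarg z]; exact (hq₁ z).ne'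
    have := mul_left_cancel₀ hq (by linarith [h] : q₂ z * (f₁ y * π₁ z y) = q₂ z * (f₂ y * π₂ z y))
    exact this
  have ratio : ∀ z y, π₁ z y / π₂ z y = f₂ y / f₁ y := by
    intro z y
    rw [div_eq_div_iff (hπ₂ z y).ne' (hf₁ y).ne']
    nlinarith [key z y]
  refine ⟨ratio, fun h z y r => ?_⟩
  have heq : π₁ = π₂ ∧ f₁ = f₂ := by
    by_contra hc
    obtain ⟨z, y, hne⟩ := h hc
    exact hne (ratio z y)
  rw [heq.1, heq.2, hmarg z]
end

section
/- Let expit(t) = 1/(1+e^{-t}) and suppose q₁, q₂ : ℝ → ℝ are differentiable with q₂' never zero, h₁, h₂ : ℝ → ℝ are differentiable. If expit(q₁(z)+h₁(y)) / expit(q₂(z)+h₂(y)) = g(y) depends only on y, and g is a ratio of two probability densities of Y (so ∫ g dP₁ = 1 for a distribution P₁ of Y), then g ≡ 1; i.e., the two missingness mechanisms coincide. -/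
open MeasureTheory

noncomputable def expit (t : ℝ) : ℝ := 1 / (1 + Real.exp (-t))

lemma expit_pos (t : ℝ) : 0 < expit t := by
  unfold expit
  positivity

lemma one_add_exp_pos (t : ℝ) : 0 < 1 + Real.exp t := by positivity

/-- If two separable logistic missingness mechanisms (with
differentiable `q₁, q₂, h₁, h₂` and `q₂'` never zero) have a ratio
`expit (q₁ z + h₁ y) / expit (q₂ z + h₂ y) = g y` depending only on `y`,
and `g` is a ratio of two probability densities of `Y` (so `∫ g dP₁ = 1`
for a distribution `P₁` of `Y`), then `g ≡ 1`, i.e. the two mechanisms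
coincide. -/
theorem stmt2 (q₁ q₂ h₁ h₂ g : ℝ → ℝ)
    (hq₁ : Differentiable ℝ q₁) (hq₂ : Differentiable ℝ q₂)
    (hh₁ : Differentiable ℝ h₁) (hh₂ : Differentiable ℝ h₂)
    (hq₂' : ∀ z, deriv q₂ z ≠ 0)
    (hratio : ∀ z y, expit (q₁ z + h₁ y) / expit (q₂ z + h₂ y) = g y)
    (μ : Measure ℝ) [IsProbabilityMeasure μ]
    (hg : ∫ y, g y ∂μ = 1) :
    (∀ y, g y = 1) ∧
      ∀ z y, expit (q₁ z + h₁ y) = expit (q₂ z + h₂ y) := by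
  -- positivity of g
  have gpos : ∀ y, 0 < g y := by
    intro y
    rw [← hratio 0 y]
    exact div_pos (expit_pos _) (expit_pos _)
  -- key algebraic identity
  have key : ∀ z y, Real.exp (-(h₂ y)) * Real.exp (-(q₂ z))
      - g y * Real.exp (-(h₁ y)) * Real.exp (-(q₁ z)) = g y - 1 := by
    intro z y
    have h := hratio z y
    unfold expit at h
    have ha : (0:ℝ) < 1 + Real.exp (-(q₁ z + h₁ y)) := one_add_exp_pos _
    have hb : (0:ℝ) < 1 + Real.exp (-(q₂ z + h₂ y)) := one_add_exp_pos _
    field_simp [ha.ne', hb.ne'] at h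
    rw [neg_add, Real.exp_add, neg_add, Real.exp_add] at h
    linear_combination h
  -- derivative in z is zero
  have dzero : ∀ z y, Real.exp (-(h₂ y)) * Real.exp (-(q₂ z)) * deriv q₂ z
      = g y * Real.exp (-(h₁ y)) * Real.exp (-(q₁ z)) * deriv q₁ z := by
    intro z y
    have h2 : HasDerivAt (fun z => Real.exp (-(q₂ z)))
        (Real.exp (-(q₂ z)) * -(deriv q₂ z)) z := ((hq₂ z).hasDerivAt.neg).exp
    have h1 : HasDerivAt (fun z => Real.exp (-(q₁ z)))
        (Real.exp (-(q₁ z)) * -(deriv q₁ z)) z := ((hq₁ z).hasDerivAt.neg).exp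
    have hF : HasDerivAt (fun z => Real.exp (-(h₂ y)) * Real.exp (-(q₂ z))
        - g y * Real.exp (-(h₁ y)) * Real.exp (-(q₁ z)))
        (Real.exp (-(h₂ y)) * (Real.exp (-(q₂ z)) * -(deriv q₂ z))
          - g y * Real.exp (-(h₁ y)) * (Real.exp (-(q₁ z)) * -(deriv q₁ z))) z :=
      (h2.const_mul _).sub (h1.const_mul _)
    have hconst : (fun z => Real.exp (-(h₂ y)) * Real.exp (-(q₂ z))
        - g y * Real.exp (-(h₁ y)) * Real.exp (-(q₁ z))) = fun _ => g y - 1 :=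
      funext fun z => key z y
    rw [hconst] at hF
    have h0 := hF.unique (hasDerivAt_const z _)
    linear_combination -h0
  -- the ratio of h-exponentials is proportional
  set k : ℝ := g 0 * Real.exp (-(h₁ 0)) / Real.exp (-(h₂ 0)) with hkdef
  have hk : ∀ y, g y * Real.exp (-(h₁ y)) = k * Real.exp (-(h₂ y)) := by
    intro y
    have e0 := dzero 0 0
    have ey := dzero 0 y
    have hT : Real.exp (-(q₂ 0)) * deriv q₂ 0 ≠ 0 :=
      mul_ne_zero (Real.exp_ne_zero _) (hq₂' 0)
    have hg0 : g 0 * Real.exp (-(h₁ 0)) ≠ 0 :=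
      mul_ne_zero (gpos 0).ne' (Real.exp_ne_zero _)
    have hE2 : Real.exp (-(h₂ 0)) ≠ 0 := Real.exp_ne_zero _
    have hvd : Real.exp (-(q₁ 0)) * deriv q₁ 0 ≠ 0 := by
      intro h
      have hz : Real.exp (-(h₂ 0)) * Real.exp (-(q₂ 0)) * deriv q₂ 0 = 0 := by
        rw [e0]; linear_combination (g 0 * Real.exp (-(h₁ 0))) * h
      exact (mul_ne_zero (mul_ne_zero hE2 (Real.exp_ne_zero _)) (hq₂' 0)) hz
    rw [hkdef]
    field_simp
    have hmul : (Real.exp (-(q₁ 0)) * deriv q₁ 0) *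
          (g y * Real.exp (-(h₁ y)) * Real.exp (-(h₂ 0)))
        = (Real.exp (-(q₁ 0)) * deriv q₁ 0) *
          (g 0 * Real.exp (-(h₁ 0)) * Real.exp (-(h₂ y))) := by
      linear_combination Real.exp (-(h₂ y)) * e0 - Real.exp (-(h₂ 0)) * ey
    exact mul_left_cancel₀ hvd hmul
  -- g y = 1 + m * exp(-(h₂ y))
  set m : ℝ := Real.exp (-(q₂ 0)) - k * Real.exp (-(q₁ 0)) with hmdef
  have hm : ∀ y, g y = 1 + m * Real.exp (-(h₂ y)) := by
    intro y
    have h := key 0 y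
    rw [hmdef]
    linear_combination -h - Real.exp (-(q₁ 0)) * hk y
  -- g is integrable
  have hgInt : Integrable g μ := by
    by_contra hcon
    rw [integral_undef hcon] at hg
    norm_num at hg
  -- conclude g ≡ 1
  have hg1 : ∀ y, g y = 1 := by
    rcases eq_or_ne m 0 with hm0 | hm0
    · intro y; rw [hm y, hm0]; ring
    · exfalso
      have hf : (fun y => Real.exp (-(h₂ y))) = fun y => (g y - 1) / m := by
        funext y; rw [hm y]; field_simp; ring
      have hfInt : Integrable (fun y => Real.exp (-(h₂ y))) μ := by
        rw [hf]
        exact ((hgInt.sub (integrable_const 1)).div_const m)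
      have hint : ∫ y, g y ∂μ = 1 + m * ∫ y, Real.exp (-(h₂ y)) ∂μ := by
        calc ∫ y, g y ∂μ = ∫ y, (1 + m * Real.exp (-(h₂ y))) ∂μ := by
              congr 1; funext y; exact hm y
          _ = (∫ _, (1:ℝ) ∂μ) + ∫ y, m * Real.exp (-(h₂ y)) ∂μ :=
              integral_add (integrable_const 1) (hfInt.const_mul m)
          _ = 1 + m * ∫ y, Real.exp (-(h₂ y)) ∂μ := by
              rw [integral_const, integral_const_mul]
              simp
      rw [hg] at hint
      have hzero : ∫ y, Real.exp (-(h₂ y)) ∂μ = 0 := by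
        have : m * ∫ y, Real.exp (-(h₂ y)) ∂μ = 0 := by linarith
        exact (mul_eq_zero.mp this).resolve_left hm0
      have hpos : 0 < ∫ y, Real.exp (-(h₂ y)) ∂μ := by
        rw [integral_pos_iff_support_of_nonneg
          (fun y => (Real.exp_pos _).le) hfInt]
        have : Function.support (fun y => Real.exp (-(h₂ y))) = Set.univ := by
          ext y; simp [Function.support, (Real.exp_pos _).ne']
        rw [this]
        simp
      exact hpos.ne' hzero
  refine ⟨hg1, fun z y => ?_⟩
  have h := hratio z y
  rw [hg1 y] at h
  exact (div_eq_one_iff_eq (expit_pos _).ne').mp h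
end

section
/- Let (X,Z,Y,R) be random variables with R ∈ {0,1}, and define the selection bias function η(x,y,z) = log[ odds(R=1|x,y,z) / odds(R=1|x,Y=0,z) ]. Then the conditional joint law satisfies P(r,y|x,z) = C(x,z)^{-1} · exp[(r-1)η(x,y,z)] · f(y|R=1,x,z) · P(r|Y=0,x,z), where C(x,z) is a normalizing constant, assuming 0 < P(R=1|x,y,z) < 1 everywhere. -/
/-- odds-ratio factorization of the conditional joint law.
With `η(x,y,z) = log [ odds(R=1|x,y,z) / odds(R=1|x,Y=y₀,z) ]` the selection
bias function (baseline outcome value `y₀`), the conditional joint law of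
`(R, Y)` given `(X, Z)` satisfies
`P(r,y|x,z) = C(x,z)⁻¹ exp[(r-1) η(x,y,z)] f(y|R=1,x,z) P(r|Y=y₀,x,z)`,
assuming `0 < P(R=1|x,y,z) < 1` everywhere (here: all joint probabilities are
strictly positive). -/
theorem stmt5 {𝒳 𝒵 𝒴 : Type*} [Fintype 𝒳] [Fintype 𝒵] [Fintype 𝒴]
    (p : 𝒳 → 𝒵 → 𝒴 → Bool → ℝ)   -- joint law of (X, Z, Y, R)
    (y₀ : 𝒴)                       -- baseline outcome value "Y = 0"
    (hpos : ∀ x z y b, 0 < p x z y b)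
    (hsum : ∑ x, ∑ z, ∑ y, ∑ b, p x z y b = 1)
    (η : 𝒳 → 𝒴 → 𝒵 → ℝ)
    (hη : ∀ x y z, η x y z =
      Real.log ((p x z y true / p x z y false) / (p x z y₀ true / p x z y₀ false)))
    (C : 𝒳 → 𝒵 → ℝ)
    (hC : ∀ x z, C x z = ∑ y, ∑ r : Bool,
      Real.exp (((if r then (1:ℝ) else 0) - 1) * η x y z) *
        (p x z y true / ∑ y', p x z y' true) *
        (p x z y₀ r / (p x z y₀ true + p x z y₀ false))) :
    ∀ x z y (r : Bool),
      p x z y r / (∑ y', ∑ b, p x z y' b) =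
        (C x z)⁻¹ * Real.exp (((if r then (1:ℝ) else 0) - 1) * η x y z) *
          (p x z y true / ∑ y', p x z y' true) *
          (p x z y₀ r / (p x z y₀ true + p x z y₀ false)) := by
  intro x z y r
  haveI : Nonempty 𝒴 := ⟨y⟩
  have hSa : 0 < ∑ y', p x z y' true :=
    Finset.sum_pos (fun y' _ => hpos x z y' true) Finset.univ_nonempty
  have hS : 0 < ∑ y', ∑ b, p x z y' b :=
    Finset.sum_pos (fun y' _ => Finset.sum_pos (fun b _ => hpos x z y' b)
      Finset.univ_nonempty) Finset.univ_nonempty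
  have ha0 := hpos x z y₀ true
  have hb0 := hpos x z y₀ false
  have hab : 0 < p x z y₀ true + p x z y₀ false := by linarith
  set Sa := ∑ y', p x z y' true with hSadef
  have key : ∀ (y : 𝒴) (r : Bool),
      Real.exp (((if r then (1:ℝ) else 0) - 1) * η x y z) *
        (p x z y true / Sa) *
        (p x z y₀ r / (p x z y₀ true + p x z y₀ false)) =
      p x z y₀ true / (Sa * (p x z y₀ true + p x z y₀ false)) * p x z y r := by
    intro y r
    have ha := hpos x z y true
    have hb := hpos x z y false
    cases r with
    | true =>
      simp only [if_true]
      rw [show ((1:ℝ) - 1) * η x y z = 0 by ring, Real.exp_zero]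
      field_simp
    | false =>
      rw [if_neg Bool.false_ne_true]
      have hX : (0:ℝ) < (p x z y true / p x z y false) / (p x z y₀ true / p x z y₀ false) :=
        div_pos (div_pos ha hb) (div_pos ha0 hb0)
      rw [show ((0:ℝ) - 1) * η x y z = -η x y z by ring, hη, Real.exp_neg,
        Real.exp_log hX]
      field_simp
  have hCval : C x z = p x z y₀ true / (Sa * (p x z y₀ true + p x z y₀ false)) *
      ∑ y', ∑ b, p x z y' b := by
    rw [hC]
    rw [Finset.mul_sum]
    refine Finset.sum_congr rfl fun y' _ => ?_
    rw [Finset.mul_sum]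
    exact Finset.sum_congr rfl fun r' _ => key y' r'
  have hk : p x z y₀ true / (Sa * (p x z y₀ true + p x z y₀ false)) ≠ 0 :=
    ne_of_gt (div_pos ha0 (mul_pos hSa hab))
  rw [show (C x z)⁻¹ * Real.exp (((if r then (1:ℝ) else 0) - 1) * η x y z) *
        (p x z y true / Sa) * (p x z y₀ r / (p x z y₀ true + p x z y₀ false)) =
      (C x z)⁻¹ * (Real.exp (((if r then (1:ℝ) else 0) - 1) * η x y z) *
        (p x z y true / Sa) * (p x z y₀ r / (p x z y₀ true + p x z y₀ false))) from by ring,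
    key y r, hCval, mul_inv, mul_comm ((p x z y₀ true / (Sa * (p x z y₀ true + p x z y₀ false)))⁻¹),
    mul_assoc, inv_mul_cancel_left₀ hk, div_eq_inv_mul]
end

section
/- Under the odds-ratio parametrization P(r,y|x,z) ∝ exp[(r-1)η(x,y,z)] f(y|R=1,x,z) P(r|Y=0,x,z), the conditional density of Y among nonrespondents satisfies f(y|R=0,x,z) = exp[-η(x,y,z)] f(y|R=1,x,z) / E{ exp[-η(x,Y,z)] | R=1, x, z }. -/
/-- under the odds-ratio parametrization with selection bias
function `η(x,y,z) = log [ odds(R=1|x,y,z) / odds(R=1|x,Y=y₀,z) ]`, the outcome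
density among nonrespondents satisfies
`f(y|R=0,x,z) = exp(-η(x,y,z)) f(y|R=1,x,z) / E[exp(-η(x,Y,z)) | R=1,x,z]`. -/
theorem stmt6 {𝒳 𝒵 𝒴 : Type*} [Fintype 𝒳] [Fintype 𝒵] [Fintype 𝒴]
    (p : 𝒳 → 𝒵 → 𝒴 → Bool → ℝ)   -- joint law of (X, Z, Y, R)
    (y₀ : 𝒴)                       -- baseline outcome value "Y = 0"
    (hpos : ∀ x z y b, 0 < p x z y b)
    (hsum : ∑ x, ∑ z, ∑ y, ∑ b, p x z y b = 1)
    (η : 𝒳 → 𝒴 → 𝒵 → ℝ)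
    (hη : ∀ x y z, η x y z =
      Real.log ((p x z y true / p x z y false) / (p x z y₀ true / p x z y₀ false))) :
    ∀ x z y,
      p x z y false / (∑ y', p x z y' false) =
        Real.exp (-η x y z) * (p x z y true / ∑ y', p x z y' true) /
          (∑ y', Real.exp (-η x y' z) * (p x z y' true / ∑ y'', p x z y'' true)) := by
  intro x z y
  have hST : 0 < ∑ y', p x z y' true :=
    Finset.sum_pos (fun y' _ => hpos x z y' true) ⟨y₀, Finset.mem_univ y₀⟩
  have hSF : 0 < ∑ y', p x z y' false :=
    Finset.sum_pos (fun y' _ => hpos x z y' false) ⟨y₀, Finset.mem_univ y₀⟩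
  have key : ∀ y', Real.exp (-η x y' z) * (p x z y' true / ∑ y'', p x z y'' true)
      = (p x z y₀ true / p x z y₀ false) * p x z y' false / ∑ y'', p x z y'' true := by
    intro y'
    have h1 := hpos x z y' true
    have h2 := hpos x z y' false
    have h3 := hpos x z y₀ true
    have h4 := hpos x z y₀ false
    rw [hη, ← Real.log_inv, Real.exp_log (by positivity)]
    field_simp
  rw [key]
  have hsum' : (∑ y', Real.exp (-η x y' z) * (p x z y' true / ∑ y'', p x z y'' true))
      = (p x z y₀ true / p x z y₀ false) * (∑ y', p x z y' false) / ∑ y'', p x z y'' true := by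
    rw [Finset.sum_congr rfl fun y' _ => key y', ← Finset.sum_div, ← Finset.mul_sum]
  rw [hsum']
  have h2 := hpos x z y false
  have h3 := hpos x z y₀ true
  have h4 := hpos x z y₀ false
  field_simp
end

section
/- Suppose Y ⊥ Z | X (exclusion restriction), P(R=1|X,Y,Z) = π(X,Y,Z) > σ > 0 almost surely, and let B(X) = E[h₂(X,Z)|X]. Then for any bounded functions g and h₂: E[ (R/π(X,Y,Z)) · g(X,Y) · (h₂(X,Z) - B(X)) ] = 0. -/
/-- unbiasedness of IPW estimating function (4.8) under the
exclusion restriction `Y ⊥ Z | X`.  With the true extended propensity score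
`π > σ > 0` and `B(X) = E[h₂(X,Z)|X]`, we have
`E[(R/π(X,Y,Z)) g(X,Y) (h₂(X,Z) - B(X))] = 0`. -/
theorem stmt8 {𝒳 𝒵 𝒴 : Type*} [Fintype 𝒳] [Fintype 𝒵] [Fintype 𝒴]
    (p : 𝒳 → 𝒵 → 𝒴 → Bool → ℝ)   -- joint law of (X, Z, Y, R)
    (π : 𝒳 → 𝒴 → 𝒵 → ℝ) (σ : ℝ) (g : 𝒳 → 𝒴 → ℝ) (h₂ : 𝒳 → 𝒵 → ℝ) (B : 𝒳 → ℝ)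
    (hnn : ∀ x z y b, 0 ≤ p x z y b)
    (hsum : ∑ x, ∑ z, ∑ y, ∑ b, p x z y b = 1)
    (hσ : 0 < σ) (hπσ : ∀ x y z, σ < π x y z)
    -- π is the conditional probability of R = 1 given (X, Y, Z)
    (hπ : ∀ x y z, p x z y true = π x y z * (p x z y true + p x z y false))
    -- exclusion restriction Y ⊥ Z | X:  P(x,z,y) P(x) = P(x,y) P(x,z)
    (hci : ∀ x z y, (∑ b, p x z y b) * (∑ z', ∑ y', ∑ b, p x z' y' b) =
      (∑ z', ∑ b, p x z' y b) * (∑ y', ∑ b, p x z y' b))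
    -- B(x) = E[h₂(X,Z) | X = x]
    (hB : ∀ x, B x * (∑ z, ∑ y, ∑ b, p x z y b) =
      ∑ z, (∑ y, ∑ b, p x z y b) * h₂ x z) :
    ∑ x, ∑ z, ∑ y, ∑ b, p x z y b *
      (((if b then (1:ℝ) else 0) / π x y z) * g x y * (h₂ x z - B x)) = 0 := by

  have hq : ∀ x z y, (∑ b, p x z y b *
      (((if b then (1:ℝ) else 0) / π x y z) * g x y * (h₂ x z - B x))) =
      (∑ b, p x z y b) * (g x y * (h₂ x z - B x)) := by
    intro x z y
    have hπ0 : π x y z ≠ 0 := ne_of_gt (lt_trans hσ (hπσ x y z))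
    rw [Fintype.sum_bool, Fintype.sum_bool]
    simp only [Bool.false_eq_true, if_true, if_false, zero_div, zero_mul, mul_zero, add_zero]
    have e := hπ x y z
    field_simp
    linear_combination (g x y * (h₂ x z - B x)) * e
  simp only [hq]
  apply Finset.sum_eq_zero
  intro x _
  by_cases h0 : (∑ z, ∑ y, ∑ b, p x z y b) = 0
  · apply Finset.sum_eq_zero; intro z _
    apply Finset.sum_eq_zero; intro y _
    have h1 : ∀ z y, 0 ≤ ∑ b, p x z y b :=
      fun z y => Finset.sum_nonneg fun b _ => hnn x z y b
    have h2 : (∑ b, p x z y b) = 0 := by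
      have h3 := (Finset.sum_eq_zero_iff_of_nonneg
        (fun z _ => Finset.sum_nonneg fun y _ => h1 z y)).mp h0 z (Finset.mem_univ z)
      exact (Finset.sum_eq_zero_iff_of_nonneg (fun y _ => h1 z y)).mp h3 y (Finset.mem_univ y)
    rw [h2, zero_mul]
  · have hswap : (∑ z, ∑ y, ∑ b, p x z y b) = ∑ y, ∑ z, ∑ b, p x z y b :=
      Finset.sum_comm
    have hPz : (∑ z, (∑ y, ∑ b, p x z y b) * (h₂ x z - B x)) = 0 := by
      have : (∑ z, (∑ y, ∑ b, p x z y b) * (h₂ x z - B x)) =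
          (∑ z, (∑ y, ∑ b, p x z y b) * h₂ x z) -
          B x * (∑ z, ∑ y, ∑ b, p x z y b) := by
        rw [Finset.mul_sum, ← Finset.sum_sub_distrib]
        exact Finset.sum_congr rfl fun z _ => by ring
      rw [this, ← hB x, sub_self]
    have key : (∑ z, ∑ y, ∑ b, p x z y b) *
        (∑ z, ∑ y, (∑ b, p x z y b) * (g x y * (h₂ x z - B x))) = 0 := by
      have expand : (∑ z, ∑ y, ∑ b, p x z y b) *
          (∑ z, ∑ y, (∑ b, p x z y b) * (g x y * (h₂ x z - B x))) =
          ∑ z, ∑ y, ((∑ b, p x z y b) * (∑ z', ∑ y', ∑ b, p x z' y' b)) *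
            (g x y * (h₂ x z - B x)) := by
        rw [Finset.mul_sum]
        refine Finset.sum_congr rfl fun z _ => ?_
        rw [Finset.mul_sum]
        exact Finset.sum_congr rfl fun y _ => by ring
      rw [expand]
      have expand2 : (∑ z, ∑ y, ((∑ b, p x z y b) * (∑ z', ∑ y', ∑ b, p x z' y' b)) *
            (g x y * (h₂ x z - B x))) =
          (∑ z, (∑ y', ∑ b, p x z y' b) * (h₂ x z - B x)) *
          (∑ y, (∑ z', ∑ b, p x z' y b) * g x y) := by
        rw [Finset.sum_mul_sum]
        refine Finset.sum_congr rfl fun z _ => Finset.sum_congr rfl fun y _ => ?_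
        rw [hci x z y]; ring
      rw [expand2, hPz, zero_mul]
    exact (mul_eq_zero.mp key).resolve_left h0
end

section
/- Suppose Y ⊥ Z | X and let m(X,Z) = E[q₂(X,Y) | R=0, X, Z]. Then for any bounded q₁: E[ (q₁(X,Z) - E[q₁(X,Z)|X]) · ( (1-R)·m(X,Z) + R·q₂(X,Y) ) ] = 0. -/
/-- unbiasedness of the OR estimating function (4.10) under the
exclusion restriction `Y ⊥ Z | X`.  With `m(X,Z) = E[q₂(X,Y) | R=0, X, Z]`,
`E[(q₁(X,Z) - E[q₁(X,Z)|X]) ((1-R) m(X,Z) + R q₂(X,Y))] = 0`. -/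
theorem stmt11 {𝒳 𝒵 𝒴 : Type*} [Fintype 𝒳] [Fintype 𝒵] [Fintype 𝒴]
    (p : 𝒳 → 𝒵 → 𝒴 → Bool → ℝ)   -- joint law of (X, Z, Y, R)
    (q₁ : 𝒳 → 𝒵 → ℝ) (q₂ : 𝒳 → 𝒴 → ℝ) (m : 𝒳 → 𝒵 → ℝ) (A : 𝒳 → ℝ)
    (hnn : ∀ x z y b, 0 ≤ p x z y b)
    (hsum : ∑ x, ∑ z, ∑ y, ∑ b, p x z y b = 1)
    -- exclusion restriction Y ⊥ Z | X:  P(x,z,y) P(x) = P(x,y) P(x,z)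
    (hci : ∀ x z y, (∑ b, p x z y b) * (∑ z', ∑ y', ∑ b, p x z' y' b) =
      (∑ z', ∑ b, p x z' y b) * (∑ y', ∑ b, p x z y' b))
    -- m(x,z) = E[q₂(X,Y) | R = 0, X = x, Z = z]
    (hm : ∀ x z, m x z * (∑ y, p x z y false) = ∑ y, p x z y false * q₂ x y)
    -- A(x) = E[q₁(X,Z) | X = x]
    (hA : ∀ x, A x * (∑ z, ∑ y, ∑ b, p x z y b) =
      ∑ z, (∑ y, ∑ b, p x z y b) * q₁ x z) :
    ∑ x, ∑ z, ∑ y, ∑ b, p x z y b *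
      ((q₁ x z - A x) * (if b then q₂ x y else m x z)) = 0 := by
  apply Finset.sum_eq_zero
  intro x _
  have step1 : ∀ z, ∑ y, ∑ b, p x z y b *
      ((q₁ x z - A x) * (if b then q₂ x y else m x z))
      = (q₁ x z - A x) * ∑ y, (∑ b, p x z y b) * q₂ x y := by
    intro z
    calc ∑ y, ∑ b, p x z y b * ((q₁ x z - A x) * (if b then q₂ x y else m x z))
        = ∑ y, (p x z y true * ((q₁ x z - A x) * q₂ x y)
            + p x z y false * ((q₁ x z - A x) * m x z)) := by
          apply Finset.sum_congr rfl; intro y _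
          simp only [Fintype.sum_bool, Bool.false_eq_true, if_true, if_false]
      _ = (q₁ x z - A x) * (∑ y, p x z y true * q₂ x y)
          + (q₁ x z - A x) * (m x z * ∑ y, p x z y false) := by
          rw [Finset.sum_add_distrib]
          congr 1
          · rw [Finset.mul_sum]
            exact Finset.sum_congr rfl fun y _ => by ring
          · rw [← Finset.sum_mul]; ring
      _ = (q₁ x z - A x) * ((∑ y, p x z y true * q₂ x y)
            + ∑ y, p x z y false * q₂ x y) := by
          rw [hm x z]; ring
      _ = (q₁ x z - A x) * ∑ y, (∑ b, p x z y b) * q₂ x y := by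
          congr 1
          rw [← Finset.sum_add_distrib]
          apply Finset.sum_congr rfl; intro y _
          simp only [Fintype.sum_bool]; ring
  simp only [step1]
  set Px : ℝ := ∑ z, ∑ y, ∑ b, p x z y b with hPx
  clear_value Px
  by_cases h0 : Px = 0
  · have h1 : ∑ z, ∑ y, ∑ b, p x z y b = 0 := by rw [← hPx]; exact h0
    have hz : ∀ z y b, p x z y b = 0 := by
      intro z y b
      have nn1 : ∀ z ∈ Finset.univ, (0:ℝ) ≤ ∑ y, ∑ b, p x z y b := fun z _ =>
        Finset.sum_nonneg (fun y _ => Finset.sum_nonneg (fun b _ => hnn x z y b))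
      have h2 := (Finset.sum_eq_zero_iff_of_nonneg nn1).mp h1 z (Finset.mem_univ z)
      have nn2 : ∀ y ∈ Finset.univ, (0:ℝ) ≤ ∑ b, p x z y b := fun y _ =>
        Finset.sum_nonneg (fun b _ => hnn x z y b)
      have h3 := (Finset.sum_eq_zero_iff_of_nonneg nn2).mp h2 y (Finset.mem_univ y)
      have nn3 : ∀ b ∈ Finset.univ, (0:ℝ) ≤ p x z y b := fun b _ => hnn x z y b
      exact (Finset.sum_eq_zero_iff_of_nonneg nn3).mp h3 b (Finset.mem_univ b)
    apply Finset.sum_eq_zero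
    intro z _
    have : ∑ y, (∑ b, p x z y b) * q₂ x y = 0 :=
      Finset.sum_eq_zero fun y _ => by simp [hz]
    rw [this, mul_zero]
  · have key : (∑ z, (q₁ x z - A x) * ∑ y, (∑ b, p x z y b) * q₂ x y) * Px = 0 := by
      have e1 : (∑ z, (q₁ x z - A x) * ∑ y, (∑ b, p x z y b) * q₂ x y) * Px
          = ∑ z, ∑ y, (q₁ x z - A x) * q₂ x y * ((∑ b, p x z y b) * Px) := by
        rw [Finset.sum_mul]
        apply Finset.sum_congr rfl; intro z _
        rw [Finset.mul_sum, Finset.sum_mul]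
        exact Finset.sum_congr rfl fun y _ => by ring
      have e2 : ∑ z, ∑ y, (q₁ x z - A x) * q₂ x y * ((∑ b, p x z y b) * Px)
          = ∑ z, ∑ y, (q₁ x z - A x) * q₂ x y *
              ((∑ z', ∑ b, p x z' y b) * (∑ y', ∑ b, p x z y' b)) := by
        apply Finset.sum_congr rfl; intro z _
        apply Finset.sum_congr rfl; intro y _
        rw [hPx, hci x z y]
      have e3 : ∑ z, ∑ y, (q₁ x z - A x) * q₂ x y *
              ((∑ z', ∑ b, p x z' y b) * (∑ y', ∑ b, p x z y' b))
          = (∑ z, (q₁ x z - A x) * (∑ y', ∑ b, p x z y' b)) *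
            (∑ y, (∑ z', ∑ b, p x z' y b) * q₂ x y) := by
        rw [Finset.sum_mul]
        apply Finset.sum_congr rfl; intro z _
        rw [Finset.mul_sum]
        exact Finset.sum_congr rfl fun y _ => by ring
      have hAx : A x * Px = ∑ z, (∑ y, ∑ b, p x z y b) * q₁ x z := by
        rw [hPx]; exact hA x
      have hz0 : ∑ z, (q₁ x z - A x) * (∑ y', ∑ b, p x z y' b) = 0 := by
        calc ∑ z, (q₁ x z - A x) * (∑ y', ∑ b, p x z y' b)
            = ∑ z, ((∑ y', ∑ b, p x z y' b) * q₁ x z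
                - A x * (∑ y', ∑ b, p x z y' b)) :=
              Finset.sum_congr rfl fun z _ => by ring
          _ = (∑ z, (∑ y', ∑ b, p x z y' b) * q₁ x z) - A x * Px := by
              rw [Finset.sum_sub_distrib, ← Finset.mul_sum, ← hPx]
          _ = 0 := by rw [← hAx]; ring
      rw [e1, e2, e3, hz0, zero_mul]
    exact (mul_eq_zero.mp key).resolve_right h0
end

section
/- Suppose the extended propensity score has the form π*(X,Y,Z) = expit(λ(X,Z) + η(X,Y,Z)) for possibly misspecified λ but correct η, where η is the true selection bias function so that the true f(y|R=0,x,z) ∝ exp[-η(x,y,z)] f(y|R=1,x,z). Let ρ(X,Z) = E[u(X,Y)|R=0,X,Z] be computed under the true law. Define G = (R/π*)·(u(X,Y) - ρ(X,Z)) + ρ(X,Z). Then E[G | X, Z] = E[u(X,Y) | X, Z], and hence E[G] = E[u(X,Y)]. -/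
/-- the outcome-model half of double robustness (equation S3).
The true law satisfies `logit P(R=1|x,y,z) = λ₀(x,z) + η(x,y,z)`; the working
propensity score `π* = expit (λ(X,Z) + η(X,Y,Z))` uses a possibly wrong
baseline `λ` but the correct selection bias function `η`; and
`ρ(X,Z) = E[u(X,Y)|R=0,X,Z]` is computed under the true law.  Then
`G = (R/π*)(u(X,Y) - ρ(X,Z)) + ρ(X,Z)` satisfies
`E[G | X,Z] = E[u(X,Y) | X,Z]` and hence `E[G] = E[u(X,Y)]`. -/
theorem stmt13 {𝒳 𝒵 𝒴 : Type*} [Fintype 𝒳] [Fintype 𝒵] [Fintype 𝒴]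
    (p : 𝒳 → 𝒵 → 𝒴 → Bool → ℝ)   -- joint law of (X, Z, Y, R)
    (lam lam₀ : 𝒳 → 𝒵 → ℝ) (η : 𝒳 → 𝒴 → 𝒵 → ℝ)
    (u : 𝒳 → 𝒴 → ℝ) (ρ : 𝒳 → 𝒵 → ℝ) (G : 𝒳 → 𝒵 → 𝒴 → Bool → ℝ)
    (hnn : ∀ x z y b, 0 ≤ p x z y b)
    (hsum : ∑ x, ∑ z, ∑ y, ∑ b, p x z y b = 1)
    -- true extended propensity score: expit (λ₀(x,z) + η(x,y,z))
    (htrue : ∀ x z y, p x z y true =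
      expit (lam₀ x z + η x y z) * (p x z y true + p x z y false))
    -- ρ(x,z) = E[u(X,Y) | R = 0, X = x, Z = z] under the true law
    (hρ : ∀ x z, ρ x z * (∑ y, p x z y false) = ∑ y, p x z y false * u x y)
    -- G = (R/π*)(u - ρ) + ρ with the working propensity score π*
    (hG : ∀ x z y b, G x z y b =
      (if b then (u x y - ρ x z) / expit (lam x z + η x y z) else 0) + ρ x z) :
    (∀ x z, ∑ y, ∑ b, p x z y b * G x z y b =
      ∑ y, ∑ b, p x z y b * u x y) ∧
    ∑ x, ∑ z, ∑ y, ∑ b, p x z y b * G x z y b =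
      ∑ x, ∑ z, ∑ y, ∑ b, p x z y b * u x y := by
  have key : ∀ x z, ∑ y, ∑ b, p x z y b * G x z y b =
      ∑ y, ∑ b, p x z y b * u x y := by
    intro x z
    have hexp : ∀ s : ℝ, (0:ℝ) < 1 + Real.exp (-s) := fun s => by positivity
    have hdiv : ∀ (s a : ℝ), a / expit s = a * (1 + Real.exp (-s)) := by
      intro s a
      have hne := (hexp s).ne'
      rw [expit]
      field_simp
    have hp0 : ∀ y, p x z y false =
        Real.exp (-(lam₀ x z + η x y z)) * p x z y true := by
      intro y
      have h := htrue x z y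
      rw [expit] at h
      have hne := (hexp (lam₀ x z + η x y z)).ne'
      field_simp at h
      ring_nf at h ⊢
      linarith
    have hterm : ∀ y, (∑ b, p x z y b * G x z y b) - (∑ b, p x z y b * u x y)
        = (Real.exp (lam₀ x z - lam x z) - 1) *
          (p x z y false * u x y - p x z y false * ρ x z) := by
      intro y
      have h1 : Real.exp (lam₀ x z - lam x z) * p x z y false =
          p x z y true * Real.exp (-(lam x z + η x y z)) := by
        rw [hp0 y, ← mul_assoc, ← Real.exp_add]
        ring_nf
      rw [Fintype.sum_bool, Fintype.sum_bool, hG, hG, hdiv]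
      simp only [if_true, Bool.false_eq_true, if_false]
      linear_combination -(u x y - ρ x z) * h1
    have h3 : (∑ y, p x z y false * u x y) - (∑ y, p x z y false * ρ x z) = 0 := by
      have : ∑ y, p x z y false * ρ x z = (∑ y, p x z y false) * ρ x z :=
        (Finset.sum_mul _ _ _).symm
      rw [this, ← hρ x z]
      ring
    have hsub : (∑ y, ∑ b, p x z y b * G x z y b) -
        (∑ y, ∑ b, p x z y b * u x y) = 0 := by
      rw [← Finset.sum_sub_distrib]
      have h4 : ∑ y, ((∑ b, p x z y b * G x z y b) - (∑ b, p x z y b * u x y))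
          = ∑ y, (Real.exp (lam₀ x z - lam x z) - 1) *
            (p x z y false * u x y - p x z y false * ρ x z) :=
        Finset.sum_congr rfl fun y _ => hterm y
      rw [h4, ← Finset.mul_sum, Finset.sum_sub_distrib, h3, mul_zero]
    linarith
  refine ⟨key, ?_⟩
  exact Finset.sum_congr rfl fun x _ => Finset.sum_congr rfl fun z _ => key x z
end

section
/- Suppose Y ⊥ Z | X and π(X,Y,Z) > σ > 0 a.s. Define G as in the doubly robust construction with either (a) correct π and arbitrary ρ(X,Z), or (b) the structure of the outcome-model half (correct η and ρ, arbitrary baseline λ). Then in either case, for any bounded v: E[ (v(X,Z) - E[v(X,Z)|X]) · G ] = 0, where in case (a) one uses E[G|X,Y,Z] = u(X,Y), and in case (b) E[G|X,Z] = E[u(X,Y)|X,Z] = E[u(X,Y)|X]. -/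
/-- unbiasedness of the doubly robust estimating equation (4.13)
in the union model.  Under `Y ⊥ Z | X` and `π > σ > 0`, with
`G = (R/π)(u(X,Y) - ρ(X,Z)) + ρ(X,Z)`, in either case
(a) `π` is the true extended propensity score (arbitrary `ρ`), or
(b) `π = expit (λ + η)` with correct selection bias `η` (the true score being
`expit (λ₀ + η)`) and correct `ρ = E[u(X,Y)|R=0,X,Z]`,
one has `E[(v(X,Z) - E[v(X,Z)|X]) G] = 0` for any `v`. -/
theorem stmt14 {𝒳 𝒵 𝒴 : Type*} [Fintype 𝒳] [Fintype 𝒵] [Fintype 𝒴]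
    (p : 𝒳 → 𝒵 → 𝒴 → Bool → ℝ)   -- joint law of (X, Z, Y, R)
    (π : 𝒳 → 𝒴 → 𝒵 → ℝ) (σ : ℝ)
    (u : 𝒳 → 𝒴 → ℝ) (ρ : 𝒳 → 𝒵 → ℝ) (v : 𝒳 → 𝒵 → ℝ) (Vbar : 𝒳 → ℝ)
    (G : 𝒳 → 𝒵 → 𝒴 → Bool → ℝ)
    (hnn : ∀ x z y b, 0 ≤ p x z y b)
    (hsum : ∑ x, ∑ z, ∑ y, ∑ b, p x z y b = 1)
    (hσ : 0 < σ) (hπσ : ∀ x y z, σ < π x y z)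
    -- exclusion restriction Y ⊥ Z | X:  P(x,z,y) P(x) = P(x,y) P(x,z)
    (hci : ∀ x z y, (∑ b, p x z y b) * (∑ z', ∑ y', ∑ b, p x z' y' b) =
      (∑ z', ∑ b, p x z' y b) * (∑ y', ∑ b, p x z y' b))
    -- Vbar(x) = E[v(X,Z) | X = x]
    (hV : ∀ x, Vbar x * (∑ z, ∑ y, ∑ b, p x z y b) =
      ∑ z, (∑ y, ∑ b, p x z y b) * v x z)
    -- G = (R/π)(u - ρ) + ρ
    (hG : ∀ x z y b, G x z y b =
      (if b then (u x y - ρ x z) / π x y z else 0) + ρ x z)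
    -- case (a): π is correct; or case (b): π has correct η and ρ is correct
    (hcase :
      (∀ x y z, p x z y true = π x y z * (p x z y true + p x z y false)) ∨
      ((∃ lam lam₀ : 𝒳 → 𝒵 → ℝ, ∃ η : 𝒳 → 𝒴 → 𝒵 → ℝ,
          (∀ x y z, π x y z = expit (lam x z + η x y z)) ∧
          (∀ x z y, p x z y true =
            expit (lam₀ x z + η x y z) * (p x z y true + p x z y false))) ∧
        (∀ x z, ρ x z * (∑ y, p x z y false) = ∑ y, p x z y false * u x y))) :
    ∑ x, ∑ z, ∑ y, ∑ b, p x z y b * ((v x z - Vbar x) * G x z y b) = 0 := by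
  classical
  -- Step 1: the inner (y,b)-sum reduces to (v - Vbar) * ∑_y P(x,z,y) u(x,y)
  have key : ∀ x z, ∑ y, ∑ b, p x z y b * ((v x z - Vbar x) * G x z y b)
      = (v x z - Vbar x) * ∑ y, (∑ b, p x z y b) * u x y := by
    intro x z
    rcases hcase with ha | ⟨⟨lam, lam₀, η, hπ, hs⟩, hρ⟩
    · -- case (a): π correct
      rw [Finset.mul_sum]
      refine Finset.sum_congr rfl fun y _ => ?_
      have hπ0 : π x y z ≠ 0 := ne_of_gt (hσ.trans (hπσ x y z))
      have ha' := ha x y z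
      have h1 : p x z y true * ((u x y - ρ x z) / π x y z)
          = (p x z y true + p x z y false) * (u x y - ρ x z) := by
        field_simp
        linear_combination (u x y - ρ x z) * ha'
      simp only [Fintype.sum_bool]
      rw [hG x z y true, hG x z y false, if_pos rfl, if_neg (by simp)]
      linear_combination (v x z - Vbar x) * h1
    · -- case (b): correct η and correct ρ
      have h1 : ∀ y, p x z y true * ((u x y - ρ x z) / π x y z)
          = p x z y true * (u x y - ρ x z)
            + Real.exp (lam₀ x z - lam x z) * (p x z y false * (u x y - ρ x z)) := by
        intro y
        have hE0 : p x z y true * Real.exp (-(lam₀ x z + η x y z)) = p x z y false := by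
          have h := hs x z y
          unfold expit at h
          have hpos : (0:ℝ) < 1 + Real.exp (-(lam₀ x z + η x y z)) := by positivity
          field_simp at h
          rw [show -(lam₀ x z + η x y z) = -η x y z + -lam₀ x z by ring] at h ⊢
          linear_combination h
        have hCE : Real.exp (lam₀ x z - lam x z) * Real.exp (-(lam₀ x z + η x y z))
            = Real.exp (-(lam x z + η x y z)) := by
          rw [← Real.exp_add]
          ring_nf
        rw [hπ x y z]
        unfold expit
        rw [div_div_eq_mul_div, div_one]
        linear_combination (u x y - ρ x z) * Real.exp (lam₀ x z - lam x z) * hE0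
          - (u x y - ρ x z) * p x z y true * hCE
      have h2 : ∀ y, ∑ b, p x z y b * ((v x z - Vbar x) * G x z y b)
          = (v x z - Vbar x) *
              (p x z y true * u x y
               + Real.exp (lam₀ x z - lam x z) *
                  (p x z y false * u x y - p x z y false * ρ x z)
               + p x z y false * ρ x z) := by
        intro y
        rw [Fintype.sum_bool, hG x z y true, hG x z y false, if_pos rfl, if_neg (by simp)]
        linear_combination (v x z - Vbar x) * h1 y
      have h3 : ∑ y, (p x z y true * u x y
               + Real.exp (lam₀ x z - lam x z) *
                  (p x z y false * u x y - p x z y false * ρ x z)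
               + p x z y false * ρ x z)
          = ∑ y, (∑ b, p x z y b) * u x y := by
        have hρ' := hρ x z
        simp only [Fintype.sum_bool, add_mul, Finset.sum_add_distrib,
          Finset.sum_sub_distrib, ← Finset.mul_sum, ← Finset.sum_mul]
        linear_combination (1 - Real.exp (lam₀ x z - lam x z)) * hρ'
      calc ∑ y, ∑ b, p x z y b * ((v x z - Vbar x) * G x z y b)
          = ∑ y, (v x z - Vbar x) *
              (p x z y true * u x y
               + Real.exp (lam₀ x z - lam x z) *
                  (p x z y false * u x y - p x z y false * ρ x z)
               + p x z y false * ρ x z) := Finset.sum_congr rfl fun y _ => h2 y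
        _ = (v x z - Vbar x) * ∑ y, (∑ b, p x z y b) * u x y := by
            rw [← Finset.mul_sum, h3]
  -- Step 2: each x-slice vanishes by conditional independence
  have final : ∀ x, ∑ z, (v x z - Vbar x) * (∑ y, (∑ b, p x z y b) * u x y) = 0 := by
    intro x
    have hz0 : ∑ z, (∑ y, ∑ b, p x z y b) * (v x z - Vbar x) = 0 := by
      simp only [mul_sub, Finset.sum_sub_distrib, ← Finset.sum_mul]
      linear_combination -hV x
    by_cases hQ0 : (∑ z, ∑ y, ∑ b, p x z y b) = 0
    · have hzy : ∀ z y, (∑ b, p x z y b) = 0 := by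
        intro z y
        have h1 : (0:ℝ) ≤ ∑ b, p x z y b := Finset.sum_nonneg fun b _ => hnn x z y b
        have h2 : (∑ b, p x z y b) ≤ ∑ y, ∑ b, p x z y b :=
          Finset.single_le_sum (fun y _ => Finset.sum_nonneg fun b _ => hnn x z y b)
            (Finset.mem_univ y)
        have h3 : (∑ y, ∑ b, p x z y b) ≤ ∑ z, ∑ y, ∑ b, p x z y b :=
          Finset.single_le_sum
            (fun z _ => Finset.sum_nonneg fun y _ => Finset.sum_nonneg fun b _ => hnn x z y b)
            (Finset.mem_univ z)
        linarith
      simp only [hzy, zero_mul, Finset.sum_const_zero, mul_zero]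
    · have hmain : (∑ z, ∑ y, ∑ b, p x z y b) *
          (∑ z, (v x z - Vbar x) * (∑ y, (∑ b, p x z y b) * u x y)) = 0 := by
        simp only [Finset.mul_sum]
        rw [Finset.sum_comm]
        have hy : ∀ y, ∑ z, (∑ z, ∑ y, ∑ b, p x z y b) *
              ((v x z - Vbar x) * ((∑ b, p x z y b) * u x y))
            = ((∑ z', ∑ b, p x z' y b) * u x y) *
              ∑ z, (∑ y', ∑ b, p x z y' b) * (v x z - Vbar x) := by
          intro y
          rw [Finset.mul_sum]
          refine Finset.sum_congr rfl fun z _ => ?_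
          have h := hci x z y
          linear_combination (v x z - Vbar x) * u x y * h
        calc ∑ y, ∑ z, (∑ z, ∑ y, ∑ b, p x z y b) *
              ((v x z - Vbar x) * ((∑ b, p x z y b) * u x y))
            = ∑ y, ((∑ z', ∑ b, p x z' y b) * u x y) *
              ∑ z, (∑ y', ∑ b, p x z y' b) * (v x z - Vbar x) :=
              Finset.sum_congr rfl fun y _ => hy y
          _ = 0 := by
              simp only [hz0, mul_zero, Finset.sum_const_zero]
      exact (mul_eq_zero.mp hmain).resolve_left hQ0
  calc ∑ x, ∑ z, ∑ y, ∑ b, p x z y b * ((v x z - Vbar x) * G x z y b)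
      = ∑ x, ∑ z, (v x z - Vbar x) * ∑ y, (∑ b, p x z y b) * u x y :=
        Finset.sum_congr rfl fun x _ => Finset.sum_congr rfl fun z _ => key x z
    _ = 0 := by simp only [final, Finset.sum_const_zero]
end

section
/- Let L be a random vector with density f(L), where L = (X, Z, Y) and the model imposes only the conditional independence Y ⊥ Z | X. In L²(f), the tangent space is N₁ = { s₁(Y|X) + s₂(Z|X) + s₃(X) : E[s₁|X] = E[s₂|X] = 0, E[s₃] = 0 }, and its orthogonal complement is N₁^⊥ = { C - C† : C = c(Y,X,Z) arbitrary square-integrable, C† = E[C|Z,X] + E[C|Y,X] - E[C|X] }. -/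
lemma aux_zero {ι : Type*} [Fintype ι] (w g : ι → ℝ) (hw : ∀ i, 0 < w i)
    (h : ∑ i, w i * g i ^ 2 = 0) (i : ι) : g i = 0 := by
  have h2 : ∀ j ∈ Finset.univ, (0:ℝ) ≤ w j * g j ^ 2 :=
    fun j _ => mul_nonneg (hw j).le (sq_nonneg _)
  have h3 := (Finset.sum_eq_zero_iff_of_nonneg h2).mp h i (Finset.mem_univ i)
  rcases mul_eq_zero.mp h3 with h' | h'
  · exact absurd h' (hw i).ne'
  · exact pow_eq_zero_iff two_ne_zero |>.mp h'

/-- tangent space of the model imposing only `Y ⊥ Z | X`.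
In `L²(f)` of mean-zero functions of `L = (X,Z,Y)`, the tangent space is
`N₁ = {s₁(Y|X) + s₂(Z|X) + s₃(X)}` with the conditional-mean-zero conditions,
and its orthocomplement is `N₁^⊥ = {C - C†}` with
`C† = E[C|Z,X] + E[C|Y,X] - E[C|X]`: a mean-zero `f` is orthogonal to all of
`N₁` iff it has the form `C - C†`. -/
theorem stmt15 {𝒳 𝒵 𝒴 : Type*} [Fintype 𝒳] [Fintype 𝒵] [Fintype 𝒴]
    (p : 𝒳 → 𝒵 → 𝒴 → ℝ)           -- joint law of L = (X, Z, Y)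
    (hpos : ∀ x z y, 0 < p x z y)
    (hsum : ∑ x, ∑ z, ∑ y, p x z y = 1)
    -- conditional independence Y ⊥ Z | X:  P(x,z,y) P(x) = P(x,y) P(x,z)
    (hci : ∀ x z y, p x z y * (∑ z', ∑ y', p x z' y') =
      (∑ z', p x z' y) * (∑ y', p x z y')) :
    ∀ f : 𝒳 → 𝒵 → 𝒴 → ℝ,
      (∑ x, ∑ z, ∑ y, p x z y * f x z y = 0) →
      ((∀ (s₁ : 𝒳 → 𝒴 → ℝ) (s₂ : 𝒳 → 𝒵 → ℝ) (s₃ : 𝒳 → ℝ),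
          (∀ x, ∑ z, ∑ y, p x z y * s₁ x y = 0) →
          (∀ x, ∑ z, ∑ y, p x z y * s₂ x z = 0) →
          (∑ x, ∑ z, ∑ y, p x z y * s₃ x = 0) →
          ∑ x, ∑ z, ∑ y, p x z y * (f x z y * (s₁ x y + s₂ x z + s₃ x)) = 0)
        ↔ ∃ C : 𝒳 → 𝒵 → 𝒴 → ℝ, ∀ x z y,
            f x z y = C x z y -
              ((∑ y', p x z y' * C x z y') / (∑ y', p x z y') +
               (∑ z', p x z' y * C x z' y) / (∑ z', p x z' y) -
               (∑ z', ∑ y', p x z' y' * C x z' y') /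
                 (∑ z', ∑ y', p x z' y'))) := by
  -- nonemptiness of the three types
  have h𝒳 : Nonempty 𝒳 := by
    by_contra h
    rw [not_nonempty_iff] at h
    simp at hsum
  have h𝒵 : Nonempty 𝒵 := by
    by_contra h
    rw [not_nonempty_iff] at h
    simp at hsum
  have h𝒴 : Nonempty 𝒴 := by
    by_contra h
    rw [not_nonempty_iff] at h
    simp at hsum
  -- positivity of marginals
  have hq : ∀ x z, 0 < ∑ y, p x z y :=
    fun x z => Finset.sum_pos (fun y _ => hpos x z y) Finset.univ_nonempty
  have hr : ∀ x y, 0 < ∑ z, p x z y :=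
    fun x y => Finset.sum_pos (fun z _ => hpos x z y) Finset.univ_nonempty
  have hP : ∀ x, 0 < ∑ z, ∑ y, p x z y :=
    fun x => Finset.sum_pos (fun z _ => hq x z) Finset.univ_nonempty
  intro f hf
  constructor
  · -- forward direction
    intro h
    -- Step 1: E[f | x] = 0
    have step1 : ∀ x, ∑ z, ∑ y, p x z y * f x z y = 0 := by
      have hcond : ∑ x, ∑ z, ∑ y, p x z y *
          ((∑ z', ∑ y', p x z' y' * f x z' y') / (∑ z', ∑ y', p x z' y')) = 0 := by
        have e : ∀ x, ∑ z, ∑ y, p x z y *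
            ((∑ z', ∑ y', p x z' y' * f x z' y') / (∑ z', ∑ y', p x z' y')) =
            ∑ z, ∑ y, p x z y * f x z y := by
          intro x
          rw [show (∑ z, ∑ y, p x z y *
              ((∑ z', ∑ y', p x z' y' * f x z' y') / (∑ z', ∑ y', p x z' y'))) =
              (∑ z, ∑ y, p x z y) *
              ((∑ z', ∑ y', p x z' y' * f x z' y') / (∑ z', ∑ y', p x z' y')) from by
            rw [Finset.sum_mul]
            exact Finset.sum_congr rfl fun z _ => (Finset.sum_mul _ _ _).symm]
          exact mul_div_cancel₀ _ (hP x).ne'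
        rw [Finset.sum_congr rfl fun x _ => e x]
        exact hf
      have horth := h 0 0
        (fun x => (∑ z', ∑ y', p x z' y' * f x z' y') / (∑ z', ∑ y', p x z' y'))
        (by simp) (by simp) hcond
      have hconv : ∀ x, ∑ z, ∑ y, p x z y * (f x z y * ((0:𝒳 → 𝒴 → ℝ) x y +
          (0:𝒳 → 𝒵 → ℝ) x z +
          (∑ z', ∑ y', p x z' y' * f x z' y') / (∑ z', ∑ y', p x z' y'))) =
          (∑ z', ∑ y', p x z' y')⁻¹ * (∑ z', ∑ y', p x z' y' * f x z' y') ^ 2 := by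
        intro x
        have e1 : ∑ z, ∑ y, p x z y * (f x z y * ((0:𝒳 → 𝒴 → ℝ) x y +
            (0:𝒳 → 𝒵 → ℝ) x z +
            (∑ z', ∑ y', p x z' y' * f x z' y') / (∑ z', ∑ y', p x z' y'))) =
            (∑ z, ∑ y, p x z y * f x z y) *
            ((∑ z', ∑ y', p x z' y' * f x z' y') / (∑ z', ∑ y', p x z' y')) := by
          rw [Finset.sum_mul]
          refine Finset.sum_congr rfl fun z _ => ?_
          rw [Finset.sum_mul]
          exact Finset.sum_congr rfl fun y _ => by simp; ring
        rw [e1, div_eq_mul_inv]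
        ring
      have horth2 : ∑ x, (∑ z', ∑ y', p x z' y')⁻¹ *
          (∑ z', ∑ y', p x z' y' * f x z' y') ^ 2 = 0 := by
        rw [← horth]
        exact Finset.sum_congr rfl fun x _ => (hconv x).symm
      exact aux_zero _ _ (fun x => inv_pos.mpr (hP x)) horth2
    -- Step 2: E[f | x, z] = 0
    have step2 : ∀ x z, ∑ y, p x z y * f x z y = 0 := by
      have hcond : ∀ x, ∑ z, ∑ y, p x z y *
          ((∑ y', p x z y' * f x z y') / (∑ y', p x z y')) = 0 := by
        intro x
        have e : ∀ z, ∑ y, p x z y *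
            ((∑ y', p x z y' * f x z y') / (∑ y', p x z y')) =
            ∑ y, p x z y * f x z y := by
          intro z
          rw [← Finset.sum_mul]
          exact mul_div_cancel₀ _ (hq x z).ne'
        rw [Finset.sum_congr rfl fun z _ => e z]
        exact step1 x
      have horth := h 0
        (fun x z => (∑ y', p x z y' * f x z y') / (∑ y', p x z y')) 0
        (by simp) hcond (by simp)
      have hconv : ∀ x z, ∑ y, p x z y * (f x z y * ((0:𝒳 → 𝒴 → ℝ) x y +
          (∑ y', p x z y' * f x z y') / (∑ y', p x z y') + (0:𝒳 → ℝ) x)) =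
          (∑ y', p x z y')⁻¹ * (∑ y', p x z y' * f x z y') ^ 2 := by
        intro x z
        have e1 : ∑ y, p x z y * (f x z y * ((0:𝒳 → 𝒴 → ℝ) x y +
            (∑ y', p x z y' * f x z y') / (∑ y', p x z y') + (0:𝒳 → ℝ) x)) =
            (∑ y, p x z y * f x z y) *
            ((∑ y', p x z y' * f x z y') / (∑ y', p x z y')) := by
          rw [Finset.sum_mul]
          exact Finset.sum_congr rfl fun y _ => by simp; ring
        rw [e1, div_eq_mul_inv]
        ring
      have horth2 : ∑ xz : 𝒳 × 𝒵, (∑ y', p xz.1 xz.2 y')⁻¹ *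
          (∑ y', p xz.1 xz.2 y' * f xz.1 xz.2 y') ^ 2 = 0 := by
        rw [Fintype.sum_prod_type, ← horth]
        exact Finset.sum_congr rfl fun x _ =>
          Finset.sum_congr rfl fun z _ => (hconv x z).symm
      intro x z
      exact aux_zero (fun xz : 𝒳 × 𝒵 => (∑ y', p xz.1 xz.2 y')⁻¹)
        (fun xz => ∑ y', p xz.1 xz.2 y' * f xz.1 xz.2 y')
        (fun xz => inv_pos.mpr (hq xz.1 xz.2)) horth2 (x, z)
    -- Step 3: E[f | x, y] = 0
    have step3 : ∀ x y, ∑ z, p x z y * f x z y = 0 := by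
      have hcond : ∀ x, ∑ z, ∑ y, p x z y *
          ((∑ z', p x z' y * f x z' y) / (∑ z', p x z' y)) = 0 := by
        intro x
        rw [Finset.sum_comm]
        have e : ∀ y, ∑ z, p x z y *
            ((∑ z', p x z' y * f x z' y) / (∑ z', p x z' y)) =
            ∑ z, p x z y * f x z y := by
          intro y
          rw [← Finset.sum_mul]
          exact mul_div_cancel₀ _ (hr x y).ne'
        rw [Finset.sum_congr rfl fun y _ => e y, Finset.sum_comm]
        exact step1 x
      have horth := h
        (fun x y => (∑ z', p x z' y * f x z' y) / (∑ z', p x z' y)) 0 0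
        hcond (by simp) (by simp)
      have hconv : ∀ x, ∑ z, ∑ y, p x z y * (f x z y *
          ((∑ z', p x z' y * f x z' y) / (∑ z', p x z' y) +
          (0:𝒳 → 𝒵 → ℝ) x z + (0:𝒳 → ℝ) x)) =
          ∑ y, (∑ z', p x z' y)⁻¹ * (∑ z', p x z' y * f x z' y) ^ 2 := by
        intro x
        rw [Finset.sum_comm]
        refine Finset.sum_congr rfl fun y _ => ?_
        have e1 : ∑ z, p x z y * (f x z y *
            ((∑ z', p x z' y * f x z' y) / (∑ z', p x z' y) +
            (0:𝒳 → 𝒵 → ℝ) x z + (0:𝒳 → ℝ) x)) =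
            (∑ z, p x z y * f x z y) *
            ((∑ z', p x z' y * f x z' y) / (∑ z', p x z' y)) := by
          rw [Finset.sum_mul]
          exact Finset.sum_congr rfl fun z _ => by simp; ring
        rw [e1, div_eq_mul_inv]
        ring
      have horth2 : ∑ xy : 𝒳 × 𝒴, (∑ z', p xy.1 z' xy.2)⁻¹ *
          (∑ z', p xy.1 z' xy.2 * f xy.1 z' xy.2) ^ 2 = 0 := by
        rw [Fintype.sum_prod_type, ← horth]
        exact Finset.sum_congr rfl fun x _ => (hconv x).symm
      intro x y
      exact aux_zero (fun xy : 𝒳 × 𝒴 => (∑ z', p xy.1 z' xy.2)⁻¹)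
        (fun xy => ∑ z', p xy.1 z' xy.2 * f xy.1 z' xy.2)
        (fun xy => inv_pos.mpr (hr xy.1 xy.2)) horth2 (x, y)
    refine ⟨f, fun x z y => ?_⟩
    rw [step1 x, step2 x z, step3 x y]
    simp
  · -- backward direction
    rintro ⟨C, hC⟩ s₁ s₂ s₃ hs₁ hs₂ hs₃
    -- E[f | x, z] = 0
    have F1 : ∀ x z, ∑ y, p x z y * f x z y = 0 := by
      intro x z
      have key : ∀ y, p x z y * ((∑ z', p x z' y * C x z' y) / (∑ z', p x z' y)) *
          (∑ z', ∑ y', p x z' y') =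
          (∑ y', p x z y') * (∑ z', p x z' y * C x z' y) := by
        intro y
        rw [show p x z y * ((∑ z', p x z' y * C x z' y) / (∑ z', p x z' y)) *
            (∑ z', ∑ y', p x z' y') =
            (p x z y * (∑ z', ∑ y', p x z' y')) *
            ((∑ z', p x z' y * C x z' y) / (∑ z', p x z' y)) from by ring,
          hci x z y]
        field_simp [(hq x z).ne', (hr x y).ne']
      have hB : ∑ y, p x z y * ((∑ z', p x z' y * C x z' y) / (∑ z', p x z' y)) =
          (∑ y', p x z y') * (∑ z', ∑ y', p x z' y' * C x z' y') /
          (∑ z', ∑ y', p x z' y') := by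
        have h1 : (∑ y, p x z y * ((∑ z', p x z' y * C x z' y) / (∑ z', p x z' y))) *
            (∑ z', ∑ y', p x z' y') =
            (∑ y', p x z y') * (∑ z', ∑ y', p x z' y' * C x z' y') := by
          rw [Finset.sum_mul, Finset.sum_congr rfl fun y _ => key y,
            ← Finset.mul_sum, Finset.sum_comm]
        rw [eq_div_iff (hP x).ne']
        exact h1
      calc ∑ y, p x z y * f x z y
          = ∑ y, (p x z y * C x z y -
              p x z y * ((∑ y', p x z y' * C x z y') / (∑ y', p x z y')) -
              p x z y * ((∑ z', p x z' y * C x z' y) / (∑ z', p x z' y)) +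
              p x z y * ((∑ z', ∑ y', p x z' y' * C x z' y') /
                (∑ z', ∑ y', p x z' y'))) := by
            refine Finset.sum_congr rfl fun y _ => ?_
            rw [hC x z y]; ring
        _ = (∑ y, p x z y * C x z y) -
            (∑ y, p x z y * ((∑ y', p x z y' * C x z y') / (∑ y', p x z y'))) -
            (∑ y, p x z y * ((∑ z', p x z' y * C x z' y) / (∑ z', p x z' y))) +
            (∑ y, p x z y * ((∑ z', ∑ y', p x z' y' * C x z' y') /
              (∑ z', ∑ y', p x z' y'))) := by
            rw [Finset.sum_add_distrib, Finset.sum_sub_distrib, Finset.sum_sub_distrib]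
        _ = 0 := by
            rw [hB, ← Finset.sum_mul, mul_div_cancel₀ _ (hq x z).ne',
              ← Finset.sum_mul]
            field_simp
            ring
    -- E[f | x, y] = 0
    have F2 : ∀ x y, ∑ z, p x z y * f x z y = 0 := by
      intro x y
      have key : ∀ z, p x z y * ((∑ y', p x z y' * C x z y') / (∑ y', p x z y')) *
          (∑ z', ∑ y', p x z' y') =
          (∑ z', p x z' y) * (∑ y', p x z y' * C x z y') := by
        intro z
        rw [show p x z y * ((∑ y', p x z y' * C x z y') / (∑ y', p x z y')) *
            (∑ z', ∑ y', p x z' y') =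
            (p x z y * (∑ z', ∑ y', p x z' y')) *
            ((∑ y', p x z y' * C x z y') / (∑ y', p x z y')) from by ring,
          hci x z y]
        field_simp [(hq x z).ne', (hr x y).ne']
      have hA : ∑ z, p x z y * ((∑ y', p x z y' * C x z y') / (∑ y', p x z y')) =
          (∑ z', p x z' y) * (∑ z', ∑ y', p x z' y' * C x z' y') /
          (∑ z', ∑ y', p x z' y') := by
        have h1 : (∑ z, p x z y * ((∑ y', p x z y' * C x z y') / (∑ y', p x z y'))) *
            (∑ z', ∑ y', p x z' y') =
            (∑ z', p x z' y) * (∑ z', ∑ y', p x z' y' * C x z' y') := by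
          rw [Finset.sum_mul, Finset.sum_congr rfl fun z _ => key z,
            ← Finset.mul_sum]
        rw [eq_div_iff (hP x).ne']
        exact h1
      calc ∑ z, p x z y * f x z y
          = ∑ z, (p x z y * C x z y -
              p x z y * ((∑ y', p x z y' * C x z y') / (∑ y', p x z y')) -
              p x z y * ((∑ z', p x z' y * C x z' y) / (∑ z', p x z' y)) +
              p x z y * ((∑ z', ∑ y', p x z' y' * C x z' y') /
                (∑ z', ∑ y', p x z' y'))) := by
            refine Finset.sum_congr rfl fun z _ => ?_
            rw [hC x z y]; ring
        _ = (∑ z, p x z y * C x z y) -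
            (∑ z, p x z y * ((∑ y', p x z y' * C x z y') / (∑ y', p x z y'))) -
            (∑ z, p x z y * ((∑ z', p x z' y * C x z' y) / (∑ z', p x z' y))) +
            (∑ z, p x z y * ((∑ z', ∑ y', p x z' y' * C x z' y') /
              (∑ z', ∑ y', p x z' y'))) := by
            rw [Finset.sum_add_distrib, Finset.sum_sub_distrib, Finset.sum_sub_distrib]
        _ = 0 := by
            rw [hA, ← Finset.sum_mul, mul_div_cancel₀ _ (hr x y).ne',
              ← Finset.sum_mul]
            field_simp
            ring
    -- combine
    refine Finset.sum_eq_zero fun x _ => ?_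
    have split : ∑ z, ∑ y, p x z y * (f x z y * (s₁ x y + s₂ x z + s₃ x)) =
        (∑ z, ∑ y, p x z y * (f x z y * s₁ x y)) +
        (∑ z, ∑ y, p x z y * (f x z y * s₂ x z)) +
        (∑ z, ∑ y, p x z y * (f x z y * s₃ x)) := by
      simp only [mul_add, Finset.sum_add_distrib]
    rw [split]
    have t1 : ∑ z, ∑ y, p x z y * (f x z y * s₁ x y) = 0 := by
      rw [Finset.sum_comm]
      refine Finset.sum_eq_zero fun y _ => ?_
      have e : ∑ z, p x z y * (f x z y * s₁ x y) =
          (∑ z, p x z y * f x z y) * s₁ x y := by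
        rw [Finset.sum_mul]
        exact Finset.sum_congr rfl fun z _ => by ring
      rw [e, F2 x y, zero_mul]
    have t2 : ∑ z, ∑ y, p x z y * (f x z y * s₂ x z) = 0 := by
      refine Finset.sum_eq_zero fun z _ => ?_
      have e : ∑ y, p x z y * (f x z y * s₂ x z) =
          (∑ y, p x z y * f x z y) * s₂ x z := by
        rw [Finset.sum_mul]
        exact Finset.sum_congr rfl fun y _ => by ring
      rw [e, F1 x z, zero_mul]
    have t3 : ∑ z, ∑ y, p x z y * (f x z y * s₃ x) = 0 := by
      refine Finset.sum_eq_zero fun z _ => ?_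
      have e : ∑ y, p x z y * (f x z y * s₃ x) =
          (∑ y, p x z y * f x z y) * s₃ x := by
        rw [Finset.sum_mul]
        exact Finset.sum_congr rfl fun y _ => by ring
      rw [e, F1 x z, zero_mul]
    rw [t1, t2, t3]
    ring
end

section
/- Let Y and Z be binary, X arbitrary discrete. Under Y ⊥ Z | X, every element of the orthocomplement N₁^⊥ = {C - C†} (with C† = E[C|Z,X] + E[C|Y,X] - E[C|X]) can be written as b(X)·(Y - E[Y|X])·(Z - E[Z|X]) for some function b of X, and conversely every such product lies in N₁^⊥. -/
theorem stmt16_ff (a b k F00 F11 : ℝ) (ha : 0 < a) (hb : 0 < b) (hk : 0 < k)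
    (g1 : a*F00 = b*k*F11) :
    F00 = F11 / ((1 - (b*k+b)/(b*k+a*k+(b+a))) * (1 - (b*k+a*k)/(b*k+a*k+(b+a)))) *
      ((0:ℝ) - (b*k+b)/(b*k+a*k+(b+a))) * ((0:ℝ) - (b*k+a*k)/(b*k+a*k+(b+a))) := by
  have hS : b*k+a*k+(b+a) ≠ 0 := by positivity
  have h5 : b*k+a*k+(b+a) - (b*k+b) ≠ 0 := by
    have : b*k+a*k+(b+a) - (b*k+b) = a*k + a := by ring
    rw [this]; positivity
  have h6 : b*k+a*k+(b+a) - (b*k+a*k) ≠ 0 := by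
    have : b*k+a*k+(b+a) - (b*k+a*k) = b + a := by ring
    rw [this]; positivity
  rw [show F00 = b*k*F11/a by rw [eq_div_iff ha.ne']; linarith [g1]]
  field_simp [ha.ne']
  ring

theorem stmt16_ft (a b k F01 F11 : ℝ) (ha : 0 < a) (hb : 0 < b) (hk : 0 < k)
    (g2 : F01 = -(k*F11)) :
    F01 = F11 / ((1 - (b*k+b)/(b*k+a*k+(b+a))) * (1 - (b*k+a*k)/(b*k+a*k+(b+a)))) *
      ((1:ℝ) - (b*k+b)/(b*k+a*k+(b+a))) * ((0:ℝ) - (b*k+a*k)/(b*k+a*k+(b+a))) := by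
  have hS : b*k+a*k+(b+a) ≠ 0 := by positivity
  have h5 : b*k+a*k+(b+a) - (b*k+b) ≠ 0 := by
    have : b*k+a*k+(b+a) - (b*k+b) = a*k + a := by ring
    rw [this]; positivity
  have h6 : b*k+a*k+(b+a) - (b*k+a*k) ≠ 0 := by
    have : b*k+a*k+(b+a) - (b*k+a*k) = b + a := by ring
    rw [this]; positivity
  rw [g2]
  field_simp [ha.ne']
  ring

theorem stmt16_tf (a b k F10 F11 : ℝ) (ha : 0 < a) (hb : 0 < b) (hk : 0 < k)
    (g3 : a*F10 = -(b*F11)) :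
    F10 = F11 / ((1 - (b*k+b)/(b*k+a*k+(b+a))) * (1 - (b*k+a*k)/(b*k+a*k+(b+a)))) *
      ((0:ℝ) - (b*k+b)/(b*k+a*k+(b+a))) * ((1:ℝ) - (b*k+a*k)/(b*k+a*k+(b+a))) := by
  have hS : b*k+a*k+(b+a) ≠ 0 := by positivity
  have h5 : b*k+a*k+(b+a) - (b*k+b) ≠ 0 := by
    have : b*k+a*k+(b+a) - (b*k+b) = a*k + a := by ring
    rw [this]; positivity
  have h6 : b*k+a*k+(b+a) - (b*k+a*k) ≠ 0 := by
    have : b*k+a*k+(b+a) - (b*k+a*k) = b + a := by ring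
    rw [this]; positivity
  rw [show F10 = -(b*F11)/a by rw [eq_div_iff ha.ne']; linarith [g3]]
  field_simp [ha.ne']
  ring

theorem stmt16_tt (a b k F11 : ℝ) (ha : 0 < a) (hb : 0 < b) (hk : 0 < k) :
    F11 = F11 / ((1 - (b*k+b)/(b*k+a*k+(b+a))) * (1 - (b*k+a*k)/(b*k+a*k+(b+a)))) *
      ((1:ℝ) - (b*k+b)/(b*k+a*k+(b+a))) * ((1:ℝ) - (b*k+a*k)/(b*k+a*k+(b+a))) := by
  have hS : b*k+a*k+(b+a) ≠ 0 := by positivity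
  have h5 : b*k+a*k+(b+a) - (b*k+b) ≠ 0 := by
    have : b*k+a*k+(b+a) - (b*k+b) = a*k + a := by ring
    rw [this]; positivity
  have h6 : b*k+a*k+(b+a) - (b*k+a*k) ≠ 0 := by
    have : b*k+a*k+(b+a) - (b*k+a*k) = b + a := by ring
    rw [this]; positivity
  field_simp [ha.ne']


set_option maxHeartbeats 2000000 in
/-- for binary `Y` and `Z` (arbitrary discrete `X`) with
`Y ⊥ Z | X`, the orthocomplement `N₁^⊥ = {C - C†}`
(`C† = E[C|Z,X] + E[C|Y,X] - E[C|X]`) is exactly the set of functions of the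
form `b(X) (Y - E[Y|X]) (Z - E[Z|X])`. -/
theorem stmt16 {𝒳 : Type*} [Fintype 𝒳]
    (p : 𝒳 → Bool → Bool → ℝ)     -- joint law of (X, Z, Y), Z and Y binary
    (hpos : ∀ x z y, 0 < p x z y)
    (hsum : ∑ x, ∑ z, ∑ y, p x z y = 1)
    -- conditional independence Y ⊥ Z | X
    (hci : ∀ x z y, p x z y * (∑ z', ∑ y', p x z' y') =
      (∑ z', p x z' y) * (∑ y', p x z y'))
    (EY EZ : 𝒳 → ℝ)
    (hEY : ∀ x, EY x = (∑ z, p x z true) / (∑ z, ∑ y, p x z y))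
    (hEZ : ∀ x, EZ x = (∑ y, p x true y) / (∑ z, ∑ y, p x z y)) :
    ∀ f : 𝒳 → Bool → Bool → ℝ,
      (∃ C : 𝒳 → Bool → Bool → ℝ, ∀ x z y,
          f x z y = C x z y -
            ((∑ y', p x z y' * C x z y') / (∑ y', p x z y') +
             (∑ z', p x z' y * C x z' y) / (∑ z', p x z' y) -
             (∑ z', ∑ y', p x z' y' * C x z' y') / (∑ z', ∑ y', p x z' y')))
      ↔ (∃ b : 𝒳 → ℝ, ∀ x z y,
          f x z y = b x * ((if y then (1:ℝ) else 0) - EY x) *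
            ((if z then (1:ℝ) else 0) - EZ x)) := by
  have key : ∀ x, p x true true = p x false true * p x true false / p x false false := by
    intro x
    have hK := hci x false false
    simp only [Fintype.sum_bool] at hK
    rw [eq_div_iff (hpos x false false).ne']
    linear_combination hK
  intro f
  constructor
  · rintro ⟨C, hC⟩
    refine ⟨fun x => f x true true / ((1 - EY x) * (1 - EZ x)), fun x z y => ?_⟩
    obtain ⟨a, b, k, ha, hb, hk0, hA, hB2, hc2, hd2⟩ :
        ∃ a b k, 0 < a ∧ 0 < b ∧ 0 < k ∧ p x false false = a ∧ p x false true = b ∧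
          p x true false = a * k ∧ p x true true = b * k :=
      ⟨p x false false, p x false true, p x true false / p x false false,
        hpos x false false, hpos x false true,
        div_pos (hpos x true false) (hpos x false false), rfl, rfl,
        by field_simp [(hpos x false false).ne'], by rw [key x]; ring⟩
    have h1 : b + a ≠ 0 := by positivity
    have h2 : b * k + a * k ≠ 0 := by positivity
    have h3 : a * k + a ≠ 0 := by positivity
    have h4 : b * k + b ≠ 0 := by positivity
    have hS : b * k + a * k + (b + a) ≠ 0 := by positivity
    -- centering identities
    have e1 : a * f x false false + a * k * f x true false = 0 := by
      rw [hC x false false, hC x true false]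
      simp only [Fintype.sum_bool]
      rw [hc2, hd2, hA, hB2]
      field_simp
      ring
    have e2 : b * f x false true + b * k * f x true true = 0 := by
      rw [hC x false true, hC x true true]
      simp only [Fintype.sum_bool]
      rw [hc2, hd2, hA, hB2]
      field_simp
      ring
    have e4 : a * k * f x true false + b * k * f x true true = 0 := by
      rw [hC x true false, hC x true true]
      simp only [Fintype.sum_bool]
      rw [hc2, hd2, hA, hB2]
      field_simp
      ring
    show f x z y = f x true true / ((1 - EY x) * (1 - EZ x)) *
      ((if y then (1:ℝ) else 0) - EY x) * ((if z then (1:ℝ) else 0) - EZ x)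
    rw [hEY x, hEZ x]
    simp only [Fintype.sum_bool]
    rw [hc2, hd2, hA, hB2]
    cases z <;> cases y <;> simp only [if_true, if_false, Bool.false_eq_true]
    · -- z = false, y = false
      have g1 : a * f x false false = b * k * f x true true := by linear_combination e1 - e4
      exact stmt16_ff a b k _ _ ha hb hk0 g1
    · -- z = false, y = true
      have g2 : f x false true = -(k * f x true true) :=
        mul_left_cancel₀ hb.ne' (by linear_combination e2)
      exact stmt16_ft a b k _ _ ha hb hk0 g2
    · -- z = true, y = false
      have g3 : a * f x true false = -(b * f x true true) :=
        mul_left_cancel₀ hk0.ne' (by linear_combination e4)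
      exact stmt16_tf a b k _ _ ha hb hk0 g3
    · -- z = true, y = true
      exact stmt16_tt a b k _ ha hb hk0
  · rintro ⟨B, hB⟩
    refine ⟨f, fun x z y => ?_⟩
    obtain ⟨a, b, k, ha, hb, hk0, hA, hB2, hc2, hd2⟩ :
        ∃ a b k, 0 < a ∧ 0 < b ∧ 0 < k ∧ p x false false = a ∧ p x false true = b ∧
          p x true false = a * k ∧ p x true true = b * k :=
      ⟨p x false false, p x false true, p x true false / p x false false,
        hpos x false false, hpos x false true,
        div_pos (hpos x true false) (hpos x false false), rfl, rfl,
        by field_simp [(hpos x false false).ne'], by rw [key x]; ring⟩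
    have h1 : b + a ≠ 0 := by positivity
    have h2 : b * k + a * k ≠ 0 := by positivity
    have h3 : a * k + a ≠ 0 := by positivity
    have h4 : b * k + b ≠ 0 := by positivity
    have hS : b * k + a * k + (b + a) ≠ 0 := by positivity
    simp only [hB, hEY, hEZ, Fintype.sum_bool]
    clear hB hEY hEZ hci hpos hsum key
    cases z <;> cases y <;>
      · simp only [if_true, if_false, Bool.false_eq_true]
        rw [hc2, hd2, hA, hB2]
        field_simp
        ring
end

section
/- Let (L, R) be complete data with R ∈ {0,1}, π(L) = P(R=1|L) > σ > 0 a.s., and let the observed data be O = (R, X, Z, YR) where L = (X,Z,Y). For an arbitrary square-integrable function C of L with full-data orthocomplement element C - C†, define N(a) = R(C - C†)/π(L) + (1-R)a(X,Z) - R·E[(1-R)a(X,Z)|L]/π(L). Then E[ N(a)·(R - π(L))·g(X,Z) ] = 0 for all bounded g if and only if a(X,Z) = E[C - C† | R=0, X, Z] almost surely. -/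
/-- Lemma 1 of the Supplemental Appendix.  With
`π(L) = P(R=1|L) > σ > 0`, full-data orthocomplement element `D = C - C†`
(with `C† = E[C|Z,X] + E[C|Y,X] - E[C|X]` under the full-data law of
`L = (X,Z,Y)`), and
`N(a) = R D/π(L) + (1-R) a(X,Z) - R E[(1-R)a(X,Z)|L]/π(L)`
(note `E[(1-R)a(X,Z)|L] = (1-π(L)) a(X,Z)`), one has
`E[N(a) (R - π(L)) g(X,Z)] = 0` for all `g` iff
`a(X,Z) = E[D | R=0, X, Z]` almost surely. -/
theorem stmt17 {𝒳 𝒵 𝒴 : Type*} [Fintype 𝒳] [Fintype 𝒵] [Fintype 𝒴]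
    (p : 𝒳 → 𝒵 → 𝒴 → Bool → ℝ)   -- joint law of (X, Z, Y, R)
    (σ : ℝ) (π : 𝒳 → 𝒵 → 𝒴 → ℝ)
    (hpos : ∀ x z y b, 0 < p x z y b)
    (hsum : ∑ x, ∑ z, ∑ y, ∑ b, p x z y b = 1)
    (hπ : ∀ x z y, π x z y = p x z y true / (p x z y true + p x z y false))
    (hσ : 0 < σ) (hπσ : ∀ x z y, σ < π x z y)
    (C D : 𝒳 → 𝒵 → 𝒴 → ℝ)
    -- D = C - C† under the full-data law pL(x,z,y) = Σ_b p(x,z,y,b)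
    (hD : ∀ x z y, D x z y = C x z y -
      ((∑ y', (∑ b, p x z y' b) * C x z y') / (∑ y', ∑ b, p x z y' b) +
       (∑ z', (∑ b, p x z' y b) * C x z' y) / (∑ z', ∑ b, p x z' y b) -
       (∑ z', ∑ y', (∑ b, p x z' y' b) * C x z' y') /
         (∑ z', ∑ y', ∑ b, p x z' y' b)))
    (a : 𝒳 → 𝒵 → ℝ) :
    (∀ g : 𝒳 → 𝒵 → ℝ,
      ∑ x, ∑ z, ∑ y, ∑ b, p x z y b *
        ((if b then D x z y / π x z y - (1 - π x z y) * a x z / π x z y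
          else a x z) *
         (((if b then (1:ℝ) else 0) - π x z y) * g x z)) = 0)
    ↔ (∀ x z, a x z * (∑ y, p x z y false) = ∑ y, p x z y false * D x z y) := by
  classical
  have total : ∀ g : 𝒳 → 𝒵 → ℝ,
      (∑ x, ∑ z, ∑ y, ∑ b, p x z y b *
        ((if b then D x z y / π x z y - (1 - π x z y) * a x z / π x z y
          else a x z) *
         (((if b then (1:ℝ) else 0) - π x z y) * g x z)))
      = ∑ x, ∑ z,
          ((∑ y, p x z y false * D x z y) - a x z * ∑ y, p x z y false) * g x z := by
    intro g
    refine Finset.sum_congr rfl fun x _ => Finset.sum_congr rfl fun z _ => ?_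
    have step : ∀ y : 𝒴, (∑ b, p x z y b *
        ((if b then D x z y / π x z y - (1 - π x z y) * a x z / π x z y
          else a x z) *
         (((if b then (1:ℝ) else 0) - π x z y) * g x z)))
        = (p x z y false * D x z y - p x z y false * a x z) * g x z := by
      intro y
      have ht := hpos x z y true
      have hf := hpos x z y false
      have hs : p x z y true + p x z y false ≠ 0 := by positivity
      rw [Fintype.sum_bool]
      simp only [if_true, if_false, Bool.false_eq_true]
      rw [hπ x z y]
      field_simp
      ring
    rw [Finset.sum_congr rfl fun y _ => step y, ← Finset.sum_mul,
      Finset.sum_sub_distrib, Finset.mul_sum]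
    congr 1
    congr 1
    exact Finset.sum_congr rfl fun y _ => mul_comm _ _
  constructor
  · intro h x0 z0
    have h0 := h (fun x z => if x = x0 then (if z = z0 then 1 else 0) else 0)
    rw [total] at h0
    have e1 : ∀ x, (∑ z, ((∑ y, p x z y false * D x z y) -
          a x z * ∑ y, p x z y false) *
          (if x = x0 then (if z = z0 then (1:ℝ) else 0) else 0))
        = if x = x0 then ((∑ y, p x0 z0 y false * D x0 z0 y) -
            a x0 z0 * ∑ y, p x0 z0 y false) else 0 := by
      intro x
      by_cases hx : x = x0 <;>
        simp [hx, mul_ite, Finset.sum_ite_eq']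
    rw [Finset.sum_congr rfl fun x _ => e1 x] at h0
    simp [Finset.sum_ite_eq'] at h0
    linarith
  · intro h g
    rw [total]
    refine Finset.sum_eq_zero fun x _ => Finset.sum_eq_zero fun z _ => ?_
    rw [h x z]
    ring
end
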